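/- For every r > 0: ∫_ℝ ( p_{1+r}(y) − p_r(y) )² dy ≤ Γ(1/α) / (α r^{1/α}). -/

import Mathlib

open MeasureTheory Real Set Filter


lemma integrable_exp_abs_rpow {b p : ℝ} (hb : 0 < b) (hp : 1 ≤ p) :
    Integrable (fun x : ℝ => Real.exp (-b * |x| ^ p)) := by
  have h1 : IntegrableOn (fun x : ℝ => Real.exp (-b * x ^ p)) (Set.Ioi 0) := by
    have := integrableOn_rpow_mul_exp_neg_mul_rpow (s := 0) (by norm_num) (lt_of_lt_of_le one_pos hp) hb
    simpa [Real.rpow_zero] using this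
  have h2 : IntegrableOn (fun x : ℝ => Real.exp (-b * |x| ^ p)) (Set.Ioi 0) := by
    refine h1.congr_fun (fun x hx => ?_) measurableSet_Ioi
    rw [abs_of_pos hx]
  have h3 : IntegrableOn (fun x : ℝ => Real.exp (-b * |x| ^ p)) (Set.Iic 0) := by
    rw [← Measure.map_neg_eq_self (volume : Measure ℝ)]
    have m : MeasurableEmbedding fun x : ℝ => -x :=
      (Homeomorph.neg ℝ).measurableEmbedding
    rw [m.integrableOn_map_iff]
    simp_rw [Function.comp_def, abs_neg, neg_preimage, neg_Iic, neg_zero]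
    exact Iff.mpr integrableOn_Ici_iff_integrableOn_Ioi h2
  have := h3.union h2
  rwa [Set.Iic_union_Ioi, integrableOn_univ] at this

lemma integral_cos_mul_gauss {ε : ℝ} (hε : 0 < ε) (u : ℝ) :
    ∫ y : ℝ, Real.cos (u * y) * Real.exp (-ε * y ^ 2)
      = Real.sqrt (π / ε) * Real.exp (-u ^ 2 / (4 * ε)) := by
  have hb : 0 < ((ε : ℂ)).re := by simpa using hε
  have h := fourierIntegral_gaussian hb ((u : ℂ))
  have hint : Integrable (fun x : ℝ =>
      Complex.exp (Complex.I * u * x) * Complex.exp (-(ε : ℂ) * x ^ 2)) := by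
    refine (integrable_exp_neg_mul_sq hε).mono' ?_ ?_
    · apply Continuous.aestronglyMeasurable
      fun_prop
    · filter_upwards with x
      rw [norm_mul, Complex.norm_exp,
        Complex.norm_exp]
      have h1 : (Complex.I * u * x).re = 0 := by simp
      have h2 : (-(ε : ℂ) * (x:ℂ) ^ 2).re = -ε * x ^ 2 := by
        simp [pow_two]
      rw [h1, h2]
      simp
  have lhs : ∫ y : ℝ, Real.cos (u * y) * Real.exp (-ε * y ^ 2)
      = (∫ x : ℝ, Complex.exp (Complex.I * u * x) * Complex.exp (-(ε : ℂ) * x ^ 2)).re := by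
    have h5 := integral_re hint
    simp only [RCLike.re_to_complex] at h5
    rw [← h5]
    congr 1 with x
    rw [← Complex.exp_add, Complex.exp_re]
    have h1 : (Complex.I * u * x + -(ε : ℂ) * (x:ℂ) ^ 2).re = -ε * x ^ 2 := by
      simp [pow_two]
    have h2 : (Complex.I * u * x + -(ε : ℂ) * (x:ℂ) ^ 2).im = u * x := by
      simp [pow_two]
    rw [h1, h2]; ring
  rw [lhs, h]
  have h3 : ((π : ℂ) / (ε:ℂ)) ^ (1 / 2 : ℂ) = ((Real.sqrt (π / ε) : ℝ) : ℂ) := by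
    rw [Real.sqrt_eq_rpow, Complex.ofReal_cpow (by positivity)]
    push_cast
    norm_num
  have h4 : Complex.exp (-(u:ℂ) ^ 2 / (4 * (ε:ℂ))) = ((Real.exp (-u ^ 2 / (4 * ε)) : ℝ) : ℂ) := by
    rw [show (-(u:ℂ) ^ 2 / (4 * (ε:ℂ))) = ((-u ^ 2 / (4 * ε) : ℝ) : ℂ) by push_cast; ring,
      ← Complex.ofReal_exp]
  rw [h3, h4, ← Complex.ofReal_mul, Complex.ofReal_re]

lemma shear_sub (F K : ℝ → ℝ) (hFc : Continuous F) (hKc : Continuous K)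
    (hF : Integrable F) (hK : Integrable K) (hFnn : ∀ x, 0 ≤ F x) (hKnn : ∀ x, 0 ≤ K x) :
    Integrable (fun z : ℝ × ℝ => F z.1 * K (z.1 - z.2)) ∧
      ∫ z : ℝ × ℝ, F z.1 * K (z.1 - z.2) = (∫ x, F x) * ∫ x, K x := by
  have hc : Continuous (fun z : ℝ × ℝ => F z.1 * K (z.1 - z.2)) :=
    (hFc.comp continuous_fst).mul (hKc.comp (continuous_fst.sub continuous_snd))
  have hm : AEStronglyMeasurable (fun z : ℝ × ℝ => F z.1 * K (z.1 - z.2))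
      ((volume : Measure ℝ).prod volume) := hc.aestronglyMeasurable
  have hint : Integrable (fun z : ℝ × ℝ => F z.1 * K (z.1 - z.2))
      ((volume : Measure ℝ).prod volume) := by
    refine (integrable_prod_iff hm).mpr ⟨?_, ?_⟩
    · exact Filter.Eventually.of_forall fun ξ => ((hK.comp_sub_left ξ).const_mul (F ξ))
    · refine ((hF.mul_const (∫ x, K x)).congr ?_)
      refine Filter.Eventually.of_forall fun ξ => ?_
      have : ∀ η : ℝ, ‖F ξ * K (ξ - η)‖ = F ξ * K (ξ - η) := fun η => by
        rw [Real.norm_eq_abs, abs_of_nonneg (mul_nonneg (hFnn ξ) (hKnn _))]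
      simp_rw [this]
      rw [MeasureTheory.integral_const_mul, integral_sub_left_eq_self K volume ξ]
  constructor
  · rw [Measure.volume_eq_prod]; exact hint
  · rw [Measure.volume_eq_prod, integral_prod _ hint]
    simp_rw [MeasureTheory.integral_const_mul, integral_sub_left_eq_self K volume]
    rw [integral_mul_const]

lemma shear_add (F K : ℝ → ℝ) (hFc : Continuous F) (hKc : Continuous K)
    (hF : Integrable F) (hK : Integrable K) (hFnn : ∀ x, 0 ≤ F x) (hKnn : ∀ x, 0 ≤ K x) :
    Integrable (fun z : ℝ × ℝ => F z.1 * K (z.1 + z.2)) ∧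
      ∫ z : ℝ × ℝ, F z.1 * K (z.1 + z.2) = (∫ x, F x) * ∫ x, K x := by
  have hc : Continuous (fun z : ℝ × ℝ => F z.1 * K (z.1 + z.2)) :=
    (hFc.comp continuous_fst).mul (hKc.comp (continuous_fst.add continuous_snd))
  have hm : AEStronglyMeasurable (fun z : ℝ × ℝ => F z.1 * K (z.1 + z.2))
      ((volume : Measure ℝ).prod volume) := hc.aestronglyMeasurable
  have hint : Integrable (fun z : ℝ × ℝ => F z.1 * K (z.1 + z.2))
      ((volume : Measure ℝ).prod volume) := by
    refine (integrable_prod_iff hm).mpr ⟨?_, ?_⟩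
    · exact Filter.Eventually.of_forall fun ξ => ((hK.comp_add_left ξ).const_mul (F ξ))
    · refine ((hF.mul_const (∫ x, K x)).congr ?_)
      refine Filter.Eventually.of_forall fun ξ => ?_
      have : ∀ η : ℝ, ‖F ξ * K (ξ + η)‖ = F ξ * K (ξ + η) := fun η => by
        rw [Real.norm_eq_abs, abs_of_nonneg (mul_nonneg (hFnn ξ) (hKnn _))]
      simp_rw [this]
      rw [MeasureTheory.integral_const_mul, integral_add_left_eq_self K ξ]
  constructor
  · rw [Measure.volume_eq_prod]; exact hint
  · rw [Measure.volume_eq_prod, integral_prod _ hint]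
    simp_rw [MeasureTheory.integral_const_mul, integral_add_left_eq_self K]
    rw [integral_mul_const]

lemma shear_sub' (F K : ℝ → ℝ) (hFc : Continuous F) (hKc : Continuous K)
    (hF : Integrable F) (hK : Integrable K) (hFnn : ∀ x, 0 ≤ F x) (hKnn : ∀ x, 0 ≤ K x)
    (hKe : ∀ x, K (-x) = K x) :
    Integrable (fun z : ℝ × ℝ => F z.2 * K (z.1 - z.2)) ∧
      ∫ z : ℝ × ℝ, F z.2 * K (z.1 - z.2) = (∫ x, F x) * ∫ x, K x := by
  obtain ⟨h1, h2⟩ := shear_sub F K hFc hKc hF hK hFnn hKnn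
  have he : ∀ z : ℝ × ℝ, F z.2 * K (z.1 - z.2)
      = (fun w : ℝ × ℝ => F w.1 * K (w.1 - w.2)) z.swap := by
    intro z
    simp only [Prod.fst_swap, Prod.snd_swap]
    rw [show z.2 - z.1 = -(z.1 - z.2) by ring, hKe]
  simp_rw [he]
  rw [Measure.volume_eq_prod] at h1 ⊢
  constructor
  · exact h1.swap
  · have h3 := integral_prod_swap (μ := (volume : Measure ℝ)) (ν := (volume : Measure ℝ))
      (fun w : ℝ × ℝ => F w.1 * K (w.1 - w.2))
    beta_reduce at h3
    rw [h3, ← Measure.volume_eq_prod, h2]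

lemma shear_add' (F K : ℝ → ℝ) (hFc : Continuous F) (hKc : Continuous K)
    (hF : Integrable F) (hK : Integrable K) (hFnn : ∀ x, 0 ≤ F x) (hKnn : ∀ x, 0 ≤ K x) :
    Integrable (fun z : ℝ × ℝ => F z.2 * K (z.1 + z.2)) ∧
      ∫ z : ℝ × ℝ, F z.2 * K (z.1 + z.2) = (∫ x, F x) * ∫ x, K x := by
  obtain ⟨h1, h2⟩ := shear_add F K hFc hKc hF hK hFnn hKnn
  have he : ∀ z : ℝ × ℝ, F z.2 * K (z.1 + z.2)
      = (fun w : ℝ × ℝ => F w.1 * K (w.1 + w.2)) z.swap := by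
    intro z
    simp only [Prod.fst_swap, Prod.snd_swap]
    rw [add_comm z.2 z.1]
  simp_rw [he]
  rw [Measure.volume_eq_prod] at h1 ⊢
  constructor
  · exact h1.swap
  · have h3 := integral_prod_swap (μ := (volume : Measure ℝ)) (ν := (volume : Measure ℝ))
      (fun w : ℝ × ℝ => F w.1 * K (w.1 + w.2))
    beta_reduce at h3
    rw [h3, ← Measure.volume_eq_prod, h2]

lemma reg_bound (g : ℝ → ℝ) (hgc : Continuous g) (hg : Integrable g)
    (hg2 : Integrable (fun ξ => g ξ ^ 2)) {ε : ℝ} (hε : 0 < ε) :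
    ∫ y : ℝ, (∫ ξ : ℝ, Real.cos (ξ * y) * g ξ) ^ 2 * Real.exp (-ε * y ^ 2)
      ≤ (2 * π) * ∫ ξ : ℝ, g ξ ^ 2 := by
  set k : ℝ → ℝ := fun u => Real.sqrt (π / ε) * Real.exp (-u ^ 2 / (4 * ε)) with hk
  have hknn : ∀ u, 0 ≤ k u := fun u => by positivity
  have hkc : Continuous k := by fun_prop
  have hke : ∀ u, k (-u) = k u := fun u => by simp [hk, neg_sq]
  have h0 : (0:ℝ) < 1/(4*ε) := by positivity
  have hkrw : ∀ u:ℝ, k u = Real.sqrt (π / ε) * Real.exp (-(1/(4*ε)) * u ^ 2) := fun u => by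
    simp only [hk]; congr 1; field_simp
  have hkint : Integrable k := by
    have := (integrable_exp_neg_mul_sq h0).const_mul (Real.sqrt (π / ε))
    exact this.congr (Filter.Eventually.of_forall fun u => (hkrw u).symm)
  have hkvol : ∫ u, k u = 2 * π := by
    simp_rw [hkrw]
    rw [MeasureTheory.integral_const_mul, integral_gaussian,
      ← Real.sqrt_mul (by positivity : (0:ℝ) ≤ π / ε),
      show π / ε * (π / (1/(4*ε))) = (2*π)^2 by field_simp; ring]
    exact Real.sqrt_sq (by positivity)
  have hcg : ∀ u : ℝ, Integrable (fun y : ℝ => Real.cos (u * y) * Real.exp (-ε * y ^ 2)) := by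
    intro u
    refine (integrable_exp_neg_mul_sq hε).mono'
      (Continuous.aestronglyMeasurable (by fun_prop)) ?_
    filter_upwards with y
    rw [Real.norm_eq_abs, abs_mul, Real.abs_exp]
    nlinarith [Real.abs_cos_le_one (u*y), Real.exp_pos (-ε * y^2),
      abs_nonneg (Real.cos (u*y))]
  have hgauss : ∀ u : ℝ, ∫ y : ℝ, Real.cos (u * y) * Real.exp (-ε * y ^ 2) = k u :=
    fun u => integral_cos_mul_gauss hε u
  set Φ : ℝ → ℝ × ℝ → ℝ := fun y z =>
    Real.cos (z.1 * y) * g z.1 * (Real.cos (z.2 * y) * g z.2) * Real.exp (-ε * y ^ 2) with hΦ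
  have key : ∀ y : ℝ, (∫ ξ : ℝ, Real.cos (ξ * y) * g ξ) ^ 2 * Real.exp (-ε * y ^ 2)
      = ∫ z : ℝ × ℝ, Φ y z := by
    intro y
    have h2 : ∫ z : ℝ × ℝ, (Real.cos (z.1*y) * g z.1) * (Real.cos (z.2*y) * g z.2)
        = (∫ ξ : ℝ, Real.cos (ξ*y) * g ξ) * (∫ ξ : ℝ, Real.cos (ξ*y) * g ξ) := by
      rw [Measure.volume_eq_prod]
      exact integral_prod_mul (fun ξ => Real.cos (ξ*y) * g ξ) (fun ξ => Real.cos (ξ*y) * g ξ)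
    rw [sq, ← h2, ← integral_mul_const]
  have hgabs : Integrable (fun z : ℝ × ℝ => |g z.1| * |g z.2|) := by
    rw [Measure.volume_eq_prod]; exact hg.abs.mul_prod hg.abs
  have hΦint : Integrable (Function.uncurry Φ)
      ((volume : Measure ℝ).prod (volume : Measure (ℝ × ℝ))) := by
    have hΨ : Integrable (fun p : ℝ × (ℝ × ℝ) =>
        Real.exp (-ε * p.1 ^ 2) * (|g p.2.1| * |g p.2.2|))
        ((volume : Measure ℝ).prod (volume : Measure (ℝ × ℝ))) :=
      (integrable_exp_neg_mul_sq hε).mul_prod hgabs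
    refine hΨ.mono' ?_ ?_
    · apply Continuous.aestronglyMeasurable
      simp only [Function.uncurry, hΦ]
      fun_prop
    · filter_upwards with p
      simp only [Function.uncurry, hΦ, Real.norm_eq_abs]
      simp only [abs_mul, Real.abs_exp]
      calc |Real.cos (p.2.1 * p.1)| * |g p.2.1| * (|Real.cos (p.2.2 * p.1)| * |g p.2.2|)
            * Real.exp (-ε * p.1 ^ 2)
          ≤ 1 * |g p.2.1| * (1 * |g p.2.2|) * Real.exp (-ε * p.1 ^ 2) := by
            gcongr
            · exact Real.abs_cos_le_one _
            · exact Real.abs_cos_le_one _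
        _ = Real.exp (-ε * p.1 ^ 2) * (|g p.2.1| * |g p.2.2|) := by ring
  have hswap : ∫ y : ℝ, ∫ z : ℝ × ℝ, Φ y z = ∫ z : ℝ × ℝ, ∫ y : ℝ, Φ y z :=
    integral_integral_swap hΦint
  have inner : ∀ z : ℝ × ℝ, ∫ y : ℝ, Φ y z
      = g z.1 * g z.2 * ((1:ℝ)/2 * (k (z.1 - z.2) + k (z.1 + z.2))) := by
    intro z
    have e1 : ∀ y : ℝ, Φ y z = g z.1 * g z.2 * ((1:ℝ)/2 *
        (Real.cos ((z.1 - z.2) * y) * Real.exp (-ε * y ^ 2)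
          + Real.cos ((z.1 + z.2) * y) * Real.exp (-ε * y ^ 2))) := by
      intro y
      have h := Real.two_mul_cos_mul_cos (z.1 * y) (z.2 * y)
      rw [show z.1*y - z.2*y = (z.1-z.2)*y by ring,
        show z.1*y + z.2*y = (z.1+z.2)*y by ring] at h
      simp only [hΦ]
      linear_combination (g z.1 * g z.2 * Real.exp (-ε * y ^ 2) / 2) * h
    simp_rw [e1]
    rw [MeasureTheory.integral_const_mul, MeasureTheory.integral_const_mul,
      integral_add (hcg _) (hcg _), hgauss, hgauss]
  have hg2c : Continuous fun ξ => g ξ ^ 2 := by fun_prop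
  have hg2nn : ∀ ξ, 0 ≤ g ξ ^ 2 := fun ξ => sq_nonneg _
  obtain ⟨iA, vA⟩ := shear_sub (fun ξ => g ξ ^ 2) k hg2c hkc hg2 hkint hg2nn hknn
  obtain ⟨iB, vB⟩ := shear_add (fun ξ => g ξ ^ 2) k hg2c hkc hg2 hkint hg2nn hknn
  obtain ⟨iC, vC⟩ := shear_sub' (fun ξ => g ξ ^ 2) k hg2c hkc hg2 hkint hg2nn hknn hke
  obtain ⟨iD, vD⟩ := shear_add' (fun ξ => g ξ ^ 2) k hg2c hkc hg2 hkint hg2nn hknn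
  have iAB : Integrable (fun z : ℝ × ℝ =>
      g z.1 ^ 2 * k (z.1 - z.2) + g z.1 ^ 2 * k (z.1 + z.2)) := iA.add iB
  have iCD : Integrable (fun z : ℝ × ℝ =>
      g z.2 ^ 2 * k (z.1 - z.2) + g z.2 ^ 2 * k (z.1 + z.2)) := iC.add iD
  have iABCD : Integrable (fun z : ℝ × ℝ =>
      (g z.1 ^ 2 * k (z.1 - z.2) + g z.1 ^ 2 * k (z.1 + z.2))
        + (g z.2 ^ 2 * k (z.1 - z.2) + g z.2 ^ 2 * k (z.1 + z.2))) := iAB.add iCD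
  have hQint : Integrable (fun z : ℝ × ℝ => (1/4 : ℝ) *
      ((g z.1 ^ 2 * k (z.1 - z.2) + g z.1 ^ 2 * k (z.1 + z.2))
        + (g z.2 ^ 2 * k (z.1 - z.2) + g z.2 ^ 2 * k (z.1 + z.2)))) :=
    iABCD.const_mul _
  have hWint : Integrable (fun z : ℝ × ℝ =>
      g z.1 * g z.2 * ((1:ℝ)/2 * (k (z.1 - z.2) + k (z.1 + z.2)))) := by
    refine hQint.mono' (Continuous.aestronglyMeasurable (by fun_prop)) ?_
    filter_upwards with z
    rw [Real.norm_eq_abs, abs_le]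
    constructor
    · nlinarith [mul_nonneg (add_nonneg (hknn (z.1 - z.2)) (hknn (z.1 + z.2)))
        (sq_nonneg (g z.1 + g z.2))]
    · nlinarith [mul_nonneg (add_nonneg (hknn (z.1 - z.2)) (hknn (z.1 + z.2)))
        (sq_nonneg (g z.1 - g z.2))]
  calc ∫ y : ℝ, (∫ ξ : ℝ, Real.cos (ξ * y) * g ξ) ^ 2 * Real.exp (-ε * y ^ 2)
      = ∫ y : ℝ, ∫ z : ℝ × ℝ, Φ y z := by
        exact integral_congr_ae (Filter.Eventually.of_forall key)
    _ = ∫ z : ℝ × ℝ, ∫ y : ℝ, Φ y z := hswap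
    _ = ∫ z : ℝ × ℝ, g z.1 * g z.2 * ((1:ℝ)/2 * (k (z.1 - z.2) + k (z.1 + z.2))) :=
        integral_congr_ae (Filter.Eventually.of_forall inner)
    _ ≤ ∫ z : ℝ × ℝ, (1/4 : ℝ) *
          ((g z.1 ^ 2 * k (z.1 - z.2) + g z.1 ^ 2 * k (z.1 + z.2))
            + (g z.2 ^ 2 * k (z.1 - z.2) + g z.2 ^ 2 * k (z.1 + z.2))) := by
        refine integral_mono hWint hQint fun z => ?_
        nlinarith [mul_nonneg (add_nonneg (hknn (z.1 - z.2)) (hknn (z.1 + z.2)))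
          (sq_nonneg (g z.1 - g z.2))]
    _ = (2 * π) * ∫ ξ : ℝ, g ξ ^ 2 := by
        rw [MeasureTheory.integral_const_mul, integral_add iAB iCD,
          integral_add iA iB, integral_add iC iD, vA, vB, vC, vD, hkvol]
        ring

lemma limit_step (h : ℝ → ℝ) (hc : Continuous h) (hnn : ∀ y, 0 ≤ h y) (M : ℝ)
    (hbd : ∀ y, h y ≤ M) (B : ℝ)
    (hB : ∀ ε : ℝ, 0 < ε → ∫ y : ℝ, h y * Real.exp (-ε * y ^ 2) ≤ B) :
    ∫ y : ℝ, h y ≤ B := by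
  have hint : ∀ ε : ℝ, 0 < ε → Integrable (fun y : ℝ => h y * Real.exp (-ε * y ^ 2)) := by
    intro ε hε
    refine ((integrable_exp_neg_mul_sq hε).const_mul M).mono'
      ((hc.mul (by fun_prop)).aestronglyMeasurable) ?_
    filter_upwards with y
    rw [Real.norm_eq_abs, abs_of_nonneg (mul_nonneg (hnn y) (Real.exp_pos _).le)]
    exact mul_le_mul_of_nonneg_right (hbd y) (Real.exp_pos _).le
  have hB0 : 0 ≤ B :=
    le_trans (integral_nonneg fun y => mul_nonneg (hnn y) (Real.exp_pos _).le) (hB 1 one_pos)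
  have hεn : ∀ n : ℕ, (0:ℝ) < 1/((n:ℝ)+1) := fun n => by positivity
  have fat : ∫⁻ y : ℝ, ENNReal.ofReal (h y) ≤ ENNReal.ofReal B := by
    have hφm : ∀ n : ℕ, Measurable fun y : ℝ =>
        ENNReal.ofReal (h y * Real.exp (-(1/((n:ℝ)+1)) * y ^ 2)) := fun n =>
      (hc.measurable.mul (by fun_prop : Continuous fun y : ℝ =>
        Real.exp (-(1/((n:ℝ)+1)) * y ^ 2)).measurable).ennreal_ofReal
    have hlim : ∀ y : ℝ, Tendsto (fun n : ℕ =>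
        ENNReal.ofReal (h y * Real.exp (-(1/((n:ℝ)+1)) * y ^ 2))) atTop
        (nhds (ENNReal.ofReal (h y))) := by
      intro y
      have h1 : Tendsto (fun n : ℕ => -(1/((n:ℝ)+1)) * y ^ 2) atTop (nhds 0) := by
        have := (tendsto_one_div_add_atTop_nhds_zero_nat).neg.mul_const (y ^ 2)
        simpa using this
      have h2 : Tendsto (fun n : ℕ => h y * Real.exp (-(1/((n:ℝ)+1)) * y ^ 2)) atTop
          (nhds (h y)) := by
        have := (Real.continuous_exp.tendsto 0).comp h1
        have h3 := this.const_mul (h y)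
        simpa using h3
      exact (ENNReal.continuous_ofReal.tendsto _).comp h2
    calc ∫⁻ y : ℝ, ENNReal.ofReal (h y)
        = ∫⁻ y : ℝ, liminf (fun n : ℕ =>
            ENNReal.ofReal (h y * Real.exp (-(1/((n:ℝ)+1)) * y ^ 2))) atTop := by
          congr 1; funext y; exact ((hlim y).liminf_eq).symm
      _ ≤ liminf (fun n : ℕ => ∫⁻ y : ℝ,
            ENNReal.ofReal (h y * Real.exp (-(1/((n:ℝ)+1)) * y ^ 2))) atTop :=
          lintegral_liminf_le hφm
      _ ≤ ENNReal.ofReal B := by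
          refine liminf_le_of_frequently_le (Frequently.of_forall fun n => ?_)
          rw [← ofReal_integral_eq_lintegral_ofReal (hint _ (hεn n))
            (Eventually.of_forall fun y => mul_nonneg (hnn y) (Real.exp_pos _).le)]
          exact ENNReal.ofReal_le_ofReal (hB _ (hεn n))
  have hmeas : AEStronglyMeasurable h (volume : Measure ℝ) := hc.aestronglyMeasurable
  have hint2 : Integrable h := by
    refine ⟨hmeas, ?_⟩
    rw [hasFiniteIntegral_iff_ofReal (Eventually.of_forall hnn)]
    exact lt_of_le_of_lt fat ENNReal.ofReal_lt_top
  rw [integral_eq_lintegral_of_nonneg_ae (Eventually.of_forall hnn) hmeas]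
  exact ENNReal.toReal_le_of_le_ofReal hB0 fat

noncomputable def stableKernel (α t x : ℝ) : ℝ :=
  (2 * Real.pi)⁻¹ * ∫ ξ : ℝ, Real.cos (ξ * x) * Real.exp (-(t * |ξ| ^ α) / 2)

theorem stmt_13 (α : ℝ) (hα : α ∈ Set.Ioc (1 : ℝ) 2) (r : ℝ) (hr : 0 < r) :
    (∫ y : ℝ, (stableKernel α (1 + r) y - stableKernel α r y) ^ 2)
      ≤ Real.Gamma (1 / α) / (α * r ^ (1 / α)) := by
  obtain ⟨hα1, hα2⟩ := hα
  have hα0 : (0:ℝ) < α := lt_trans one_pos hα1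
  set g : ℝ → ℝ := fun ξ =>
    Real.exp (-((1 + r) * |ξ| ^ α) / 2) - Real.exp (-(r * |ξ| ^ α) / 2) with hgdef
  have hA : Continuous fun ξ : ℝ => |ξ| ^ α :=
    continuous_abs.rpow_const fun x => Or.inr hα0.le
  have hexpc : ∀ t : ℝ, Continuous fun ξ : ℝ => Real.exp (-(t * |ξ| ^ α) / 2) := fun t =>
    Real.continuous_exp.comp (((continuous_const.mul hA).neg).div_const 2)
  have hgc : Continuous g := (hexpc (1 + r)).sub (hexpc r)
  have hexp : ∀ t : ℝ, 0 < t → Integrable (fun ξ : ℝ => Real.exp (-(t * |ξ| ^ α) / 2)) := by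
    intro t ht
    refine (integrable_exp_abs_rpow (by positivity : (0:ℝ) < t/2) hα1.le).congr
      (Eventually.of_forall fun ξ => ?_)
    show Real.exp (-(t/2) * |ξ| ^ α) = Real.exp (-(t * |ξ| ^ α) / 2)
    exact congrArg Real.exp (by ring)
  have hg : Integrable g := (hexp _ (by positivity)).sub (hexp _ hr)
  have hExpr : Integrable (fun ξ : ℝ => Real.exp (-r * |ξ| ^ α)) :=
    integrable_exp_abs_rpow hr hα1.le
  have hbound : ∀ ξ : ℝ, g ξ ^ 2 ≤ Real.exp (-r * |ξ| ^ α) := by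
    intro ξ
    have ha : (0:ℝ) ≤ |ξ| ^ α := Real.rpow_nonneg (abs_nonneg ξ) α
    have hle : Real.exp (-((1 + r) * |ξ| ^ α) / 2) ≤ Real.exp (-(r * |ξ| ^ α) / 2) :=
      Real.exp_le_exp.mpr (by nlinarith)
    have hpos : 0 < Real.exp (-((1 + r) * |ξ| ^ α) / 2) := Real.exp_pos _
    have hsq : Real.exp (-(r * |ξ| ^ α) / 2) ^ 2 = Real.exp (-r * |ξ| ^ α) := by
      rw [← Real.exp_nat_mul]
      congr 1; ring
    simp only [hgdef]
    nlinarith [Real.exp_pos (-(r * |ξ| ^ α) / 2)]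
  have hg2 : Integrable fun ξ => g ξ ^ 2 := by
    refine hExpr.mono' ((hgc.pow 2).aestronglyMeasurable) ?_
    filter_upwards with ξ
    rw [Real.norm_eq_abs, abs_of_nonneg (sq_nonneg _)]
    exact hbound ξ
  have hintcos : ∀ t : ℝ, 0 < t → ∀ y : ℝ,
      Integrable (fun ξ : ℝ => Real.cos (ξ * y) * Real.exp (-(t * |ξ| ^ α) / 2)) := by
    intro t ht y
    refine (hexp t ht).mono'
      ((continuous_cos.comp (continuous_id.mul continuous_const)).mul (hexpc t)
        |>.aestronglyMeasurable) ?_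
    filter_upwards with ξ
    rw [Real.norm_eq_abs, abs_mul, Real.abs_exp]
    exact (mul_le_mul_of_nonneg_right (Real.abs_cos_le_one _)
      (Real.exp_pos _).le).trans_eq (one_mul _)
  have hdiff : ∀ y : ℝ, stableKernel α (1 + r) y - stableKernel α r y
      = (2 * π)⁻¹ * ∫ ξ : ℝ, Real.cos (ξ * y) * g ξ := by
    intro y
    unfold stableKernel
    rw [← mul_sub, ← integral_sub (hintcos _ (by positivity) y) (hintcos _ hr y)]
    congr 1
    apply integral_congr_ae
    filter_upwards with ξ
    simp only [hgdef]
    ring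
  -- continuity and boundedness of F y = ∫ ξ, cos (ξ y) g ξ
  have hFb : ∀ y : ℝ, |∫ ξ : ℝ, Real.cos (ξ * y) * g ξ| ≤ ∫ ξ : ℝ, |g ξ| := by
    intro y
    have h1 := norm_integral_le_integral_norm (μ := (volume : Measure ℝ))
      (fun ξ : ℝ => Real.cos (ξ * y) * g ξ)
    rw [Real.norm_eq_abs] at h1
    refine h1.trans ?_
    have hi : Integrable (fun ξ : ℝ => Real.cos (ξ * y) * g ξ) := by
      have := (hintcos _ (by positivity : (0:ℝ) < 1 + r) y).sub (hintcos _ hr y)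
      refine this.congr (Eventually.of_forall fun ξ => ?_)
      simp only [hgdef, Pi.sub_apply]; ring
    refine integral_mono hi.norm hg.abs fun ξ => ?_
    show ‖Real.cos (ξ * y) * g ξ‖ ≤ |g ξ|
    rw [Real.norm_eq_abs, abs_mul]
    exact (mul_le_mul_of_nonneg_right (Real.abs_cos_le_one _)
      (abs_nonneg _)).trans_eq (one_mul _)
  have hFc : Continuous fun y : ℝ => ∫ ξ : ℝ, Real.cos (ξ * y) * g ξ := by
    refine continuous_of_dominated (F := fun y ξ => Real.cos (ξ * y) * g ξ)
      (bound := fun ξ => |g ξ|)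
      (fun y => ((Real.continuous_cos.comp (continuous_id.mul continuous_const)).mul
        hgc).aestronglyMeasurable)
      (fun y => Eventually.of_forall fun ξ => ?_) hg.abs
      (Eventually.of_forall fun ξ => by fun_prop)
    show ‖Real.cos (ξ * y) * g ξ‖ ≤ |g ξ|
    rw [Real.norm_eq_abs, abs_mul]
    exact (mul_le_mul_of_nonneg_right (Real.abs_cos_le_one _)
      (abs_nonneg _)).trans_eq (one_mul _)
  -- apply the limit step
  set I : ℝ := ∫ ξ : ℝ, |g ξ| with hI
  have hI0 : 0 ≤ I := integral_nonneg fun ξ => abs_nonneg _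
  have hmain : ∫ y : ℝ, ((2 * π)⁻¹ * ∫ ξ : ℝ, Real.cos (ξ * y) * g ξ) ^ 2
      ≤ ((2 * π)⁻¹) ^ 2 * ((2 * π) * ∫ ξ : ℝ, g ξ ^ 2) := by
    refine limit_step _ (by fun_prop) (fun y => sq_nonneg _) (((2 * π)⁻¹ * I) ^ 2)
      (fun y => ?_) _ (fun ε hε => ?_)
    · have h1 := hFb y
      have h2 : (0:ℝ) < (2 * π)⁻¹ := by positivity
      rw [abs_le] at h1
      refine sq_le_sq' ?_ ?_
      · nlinarith [mul_nonneg h2.le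
          (show (0:ℝ) ≤ (∫ ξ : ℝ, Real.cos (ξ * y) * g ξ) + I by linarith [h1.1])]
      · nlinarith [mul_nonneg h2.le
          (show (0:ℝ) ≤ I - ∫ ξ : ℝ, Real.cos (ξ * y) * g ξ by linarith [h1.2])]
    · have heq : ∀ y : ℝ, ((2 * π)⁻¹ * ∫ ξ : ℝ, Real.cos (ξ * y) * g ξ) ^ 2
          * Real.exp (-ε * y ^ 2)
          = ((2 * π)⁻¹) ^ 2 * ((∫ ξ : ℝ, Real.cos (ξ * y) * g ξ) ^ 2
            * Real.exp (-ε * y ^ 2)) := fun y => by ring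
      simp_rw [heq]
      rw [MeasureTheory.integral_const_mul]
      exact mul_le_mul_of_nonneg_left (reg_bound g hgc hg hg2 hε) (by positivity)
  have hΓpos : 0 < Real.Gamma (1 / α) := Real.Gamma_pos_of_pos (by positivity)
  have hrp : (0:ℝ) < r ^ (1 / α : ℝ) := Real.rpow_pos_of_pos hr _
  have hT : ∫ ξ : ℝ, Real.exp (-r * |ξ| ^ α)
      = 2 * (r ^ (-1 / α : ℝ) * Real.Gamma (1 / α + 1)) := by
    rw [integral_comp_abs (f := fun x => Real.exp (-r * x ^ α)),
      integral_exp_neg_mul_rpow hα0 hr]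
  have hS : ∫ ξ : ℝ, g ξ ^ 2 ≤ 2 * (r ^ (-1 / α : ℝ) * Real.Gamma (1 / α + 1)) := by
    rw [← hT]
    exact integral_mono hg2 hExpr hbound
  calc (∫ y : ℝ, (stableKernel α (1 + r) y - stableKernel α r y) ^ 2)
      = ∫ y : ℝ, ((2 * π)⁻¹ * ∫ ξ : ℝ, Real.cos (ξ * y) * g ξ) ^ 2 := by
        apply integral_congr_ae
        filter_upwards with y
        rw [hdiff y]
    _ ≤ ((2 * π)⁻¹) ^ 2 * ((2 * π) * ∫ ξ : ℝ, g ξ ^ 2) := hmain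
    _ ≤ ((2 * π)⁻¹) ^ 2 * ((2 * π) * (2 * (r ^ (-1 / α : ℝ) * Real.Gamma (1 / α + 1)))) := by
        have hπ : (0:ℝ) < 2 * π := by positivity
        exact mul_le_mul_of_nonneg_left (mul_le_mul_of_nonneg_left hS hπ.le) (by positivity)
    _ = π⁻¹ * (Real.Gamma (1 / α) / (α * r ^ (1 / α : ℝ))) := by
        rw [Real.Gamma_add_one (by positivity : (1:ℝ)/α ≠ 0),
          show (-1 / α : ℝ) = -(1 / α) by ring, Real.rpow_neg hr.le]
        have hπ : (0:ℝ) < π := Real.pi_pos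
        field_simp
    _ ≤ Real.Gamma (1 / α) / (α * r ^ (1 / α : ℝ)) := by
        have hX : 0 ≤ Real.Gamma (1 / α) / (α * r ^ (1 / α : ℝ)) := by positivity
        have hπ1 : (1:ℝ) ≤ π := by nlinarith [Real.pi_gt_three]
        nlinarith [inv_le_one_of_one_le₀ hπ1]
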